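/- arXiv:1411.6782 — 4 statements merged into one kernel-verified Lean document; each statement's English description precedes it below -/
import Mathlib

section
/- Let κ : Λ × Λ → ℤ be an even symmetric bilinear form (κ(λ,λ) ∈ 2ℤ for all λ) invariant under the Weyl group W, let N ≥ 1, and set Λ^♯ = {λ ∈ Λ : κ(λ, μ) ∈ Nℤ for all μ ∈ Λ}. For a coroot α let δ_α = N / gcd(N, κ(α,α)/2), the denominator of the rational number κ(α,α)/(2N). Then for every λ ∈ Λ^♯ and every coroot α with root α̌, the integer ⟨λ, α̌⟩ is divisible by δ_α. -/
/-- Let `κ` be an even symmetric bilinear form on `Λ`, invariant under the Weyl group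
(equivalently, under each reflection `x ↦ x - ⟨x, a⟩ • coroot a`), and `N ≥ 1`.
For a coroot `α` let `δ_α = N / gcd(N, κ(α,α)/2)` (the denominator of
`κ(α,α)/(2N)`).  Then for every `λ ∈ Λ^♯ = {λ | κ(λ, ·) ∈ Nℤ}` and every coroot `α`
with root `a`, `δ_α` divides `⟨λ, a⟩`. -/
theorem stmt_3 (Λ : Type*) [AddCommGroup Λ] [Module ℤ Λ]
    [Module.Free ℤ Λ] [Module.Finite ℤ Λ]
    (R : Finset (Module.Dual ℤ Λ)) (coroot : Module.Dual ℤ Λ → Λ)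
    (hpair : ∀ a ∈ R, a (coroot a) = 2)
    (κ : Λ →ₗ[ℤ] Λ →ₗ[ℤ] ℤ) (hκsymm : ∀ x y : Λ, κ x y = κ y x)
    (heven : ∀ x : Λ, 2 ∣ κ x x)
    (hinv : ∀ a ∈ R, ∀ x y : Λ,
      κ (x - a x • coroot a) (y - a y • coroot a) = κ x y)
    (N : ℤ) (hN : 1 ≤ N)
    (δ : Λ → ℤ) (hδ : ∀ v : Λ, δ v = N / (Int.gcd N (κ v v / 2) : ℤ)) :
    ∀ l ∈ {l : Λ | ∀ m : Λ, N ∣ κ l m}, ∀ a ∈ R, δ (coroot a) ∣ a l := by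
  intro l hl a ha
  set α := coroot a with hα
  obtain ⟨Q, hQ⟩ := heven α
  -- key identity: κ l α = a l * Q
  have key : κ l α = a l * Q := by
    have h := hinv a ha l α
    rw [hpair a ha] at h
    simp [map_sub, map_smul, smul_eq_mul] at h
    rw [← hα] at h
    have h2 : 2 * κ l α = a l * κ α α := by linarith
    rw [hQ] at h2
    linarith
  have hQk : κ α α / 2 = Q := by rw [hQ]; omega
  have hδa : δ α = N / (Int.gcd N Q : ℤ) := by rw [hδ, hQk]
  set g : ℤ := (Int.gcd N Q : ℤ) with hg
  have hgnat : 0 < Int.gcd N Q := Int.gcd_pos_of_ne_zero_left Q (by omega)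
  have hgpos : 0 < g := by rw [hg]; exact_mod_cast hgnat
  have hgN : g ∣ N := Int.gcd_dvd_left N Q
  have hgQ : g ∣ Q := Int.gcd_dvd_right N Q
  obtain ⟨n', hn'⟩ := hgN
  obtain ⟨q', hq'⟩ := hgQ
  have hcop : IsCoprime n' q' := by
    rw [Int.isCoprime_iff_gcd_eq_one]
    have h1 := Int.gcd_div_gcd_div_gcd (i := N) (j := Q) hgnat
    have e1 : N / g = n' := by rw [hn']; exact Int.mul_ediv_cancel_left _ (by omega)
    have e2 : Q / g = q' := by rw [hq']; exact Int.mul_ediv_cancel_left _ (by omega)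
    rw [← hg, e1, e2] at h1
    exact h1
  obtain ⟨c, hc⟩ : N ∣ a l * Q := key ▸ hl α
  have hdvd' : n' ∣ a l * q' := by
    refine ⟨c, ?_⟩
    have : g * (a l * q') = g * (n' * c) := by
      rw [show g * (a l * q') = a l * (g * q') by ring, ← hq', hc, hn']; ring
    exact mul_left_cancel₀ (by omega) this
  have : n' ∣ a l := hcop.dvd_of_dvd_mul_right hdvd'
  have hδn : δ α = n' := by
    rw [hδa, hn', Int.mul_ediv_cancel_left _ (by omega)]
  rwa [hδn]
end

section
/- Let κ : Λ × Λ → ℤ be an even symmetric bilinear form invariant under the Weyl group W, let N ≥ 1, and set Λ^♯ = {λ ∈ Λ : κ(λ, μ) ∈ Nℤ for all μ ∈ Λ}. For a coroot α let δ_α = N / gcd(N, κ(α,α)/2), the denominator of κ(α,α)/(2N). Then δ_α·α ∈ Λ^♯ for every coroot α. -/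
/-- With `κ` an even symmetric bilinear form on `Λ` invariant under the Weyl group
(equivalently, under each reflection), `N ≥ 1`,
`Λ^♯ = {λ | κ(λ, μ) ∈ Nℤ for all μ}` and `δ_α = N / gcd(N, κ(α,α)/2)` the denominator
of `κ(α,α)/(2N)`, one has `δ_α • α ∈ Λ^♯` for every coroot `α`. -/
theorem stmt_4 (Λ : Type*) [AddCommGroup Λ] [Module ℤ Λ]
    [Module.Free ℤ Λ] [Module.Finite ℤ Λ]
    (R : Finset (Module.Dual ℤ Λ)) (coroot : Module.Dual ℤ Λ → Λ)
    (hpair : ∀ a ∈ R, a (coroot a) = 2)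
    (κ : Λ →ₗ[ℤ] Λ →ₗ[ℤ] ℤ) (hκsymm : ∀ x y : Λ, κ x y = κ y x)
    (heven : ∀ x : Λ, 2 ∣ κ x x)
    (hinv : ∀ a ∈ R, ∀ x y : Λ,
      κ (x - a x • coroot a) (y - a y • coroot a) = κ x y)
    (N : ℤ) (hN : 1 ≤ N)
    (δ : Λ → ℤ) (hδ : ∀ v : Λ, δ v = N / (Int.gcd N (κ v v / 2) : ℤ)) :
    ∀ a ∈ R, δ (coroot a) • coroot a ∈ {l : Λ | ∀ m : Λ, N ∣ κ l m} := by
  intro a ha m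
  set x := coroot a with hx
  -- key identity: 2 * κ x m = a m * κ x x
  have hkey : 2 * κ x m = a m * κ x x := by
    have h := hinv a ha x m
    rw [hpair a ha] at h
    have hxx : x - (2 : ℤ) • x = -x := by rw [two_zsmul]; abel
    rw [hxx] at h
    simp only [map_neg, map_sub, map_zsmul, LinearMap.neg_apply,
      LinearMap.sub_apply, LinearMap.smul_apply, smul_eq_mul] at h
    linarith
  obtain ⟨c, hc⟩ := heven x
  have hc2 : κ x x / 2 = c := by omega
  have hkm : κ x m = a m * c := by
    have h2 : 2 * κ x m = 2 * (a m * c) := by rw [hkey, hc]; ring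
    linarith
  set g : ℤ := (Int.gcd N c : ℤ) with hg
  have hgN : g ∣ N := Int.gcd_dvd_left N c
  have hgc : g ∣ c := Int.gcd_dvd_right N c
  have hδx : δ x = N / g := by rw [hδ x, hc2]
  have hdvd : N ∣ δ x * c := by
    obtain ⟨d, hd⟩ := hgc
    refine ⟨d, ?_⟩
    rw [hδx, hd, ← mul_assoc, Int.ediv_mul_cancel hgN]
  have hfin : κ (δ x • x) m = a m * (δ x * c) := by
    simp only [map_zsmul, LinearMap.smul_apply, smul_eq_mul, hkm]; ring
  show N ∣ κ (δ x • x) m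
  rw [hfin]
  exact Dvd.dvd.mul_left hdvd _
end

section
/- Let κ : Λ × Λ → ℤ be an even symmetric bilinear form invariant under the Weyl group W and N ≥ 1; for a coroot α set δ_α = N / gcd(N, κ(α,α)/2). Then for any two coroots α, β one has s_α(δ_β·β) = δ_{s_α(β)}·s_α(β); consequently the set of modified coroots {δ_β·β : β a coroot of the root datum} is stable under every reflection s_α (these are the roots of the metaplectic dual root datum of Theorem 2.1). -/
/-- With `κ` an even symmetric bilinear form on `Λ` invariant under the Weyl group
(equivalently, under each reflection `s_a x = x - ⟨x, a⟩ • coroot a`), `N ≥ 1`,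
`δ v = N / gcd(N, κ(v,v)/2)`, and the set of coroots permuted by the reflections:
for any two coroots `α = coroot a`, `β = coroot b` one has
`s_a (δ_β • β) = δ_{s_a β} • s_a β`; consequently the set of modified coroots
`{δ_β • β}` is stable under every reflection `s_a`. -/
theorem stmt_6 (Λ : Type*) [AddCommGroup Λ] [Module ℤ Λ]
    [Module.Free ℤ Λ] [Module.Finite ℤ Λ]
    (R : Finset (Module.Dual ℤ Λ)) (coroot : Module.Dual ℤ Λ → Λ)
    (hpair : ∀ a ∈ R, a (coroot a) = 2)
    (hperm : ∀ a ∈ R, ∀ b ∈ R, ∃ c ∈ R,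
      coroot b - a (coroot b) • coroot a = coroot c)
    (κ : Λ →ₗ[ℤ] Λ →ₗ[ℤ] ℤ) (hκsymm : ∀ x y : Λ, κ x y = κ y x)
    (heven : ∀ x : Λ, 2 ∣ κ x x)
    (hinv : ∀ a ∈ R, ∀ x y : Λ,
      κ (x - a x • coroot a) (y - a y • coroot a) = κ x y)
    (N : ℤ) (hN : 1 ≤ N)
    (δ : Λ → ℤ) (hδ : ∀ v : Λ, δ v = N / (Int.gcd N (κ v v / 2) : ℤ)) :
    (∀ a ∈ R, ∀ b ∈ R,
      (δ (coroot b) • coroot b) - a (δ (coroot b) • coroot b) • coroot a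
        = δ (coroot b - a (coroot b) • coroot a)
            • (coroot b - a (coroot b) • coroot a)) ∧
    (∀ a ∈ R,
      (fun x : Λ => x - a x • coroot a) ''
          {v : Λ | ∃ b ∈ R, v = δ (coroot b) • coroot b}
        = {v : Λ | ∃ b ∈ R, v = δ (coroot b) • coroot b}) := by
  -- δ is invariant under each reflection
  have hδinv : ∀ a ∈ R, ∀ x : Λ, δ (x - a x • coroot a) = δ x := by
    intro a ha x
    rw [hδ, hδ, hinv a ha x x]
  -- first part
  have h1 : ∀ a ∈ R, ∀ b ∈ R,
      (δ (coroot b) • coroot b) - a (δ (coroot b) • coroot b) • coroot a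
        = δ (coroot b - a (coroot b) • coroot a)
            • (coroot b - a (coroot b) • coroot a) := by
    intro a ha b hb
    rw [hδinv a ha, map_zsmul]
    simp only [smul_eq_mul, ← Int.cast_smul_eq_zsmul ℤ, Int.cast_id]
    module
  refine ⟨h1, ?_⟩
  intro a ha
  have hinvo : ∀ x : Λ,
      (x - a x • coroot a) - a (x - a x • coroot a) • coroot a = x := by
    intro x
    have h2 := hpair a ha
    simp only [← Int.cast_smul_eq_zsmul ℤ, Int.cast_id]
    simp only [map_sub, map_smul, h2, smul_eq_mul]
    module
  ext v
  constructor
  · rintro ⟨w, ⟨b, hb, rfl⟩, rfl⟩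
    obtain ⟨c, hc, hcc⟩ := hperm a ha b hb
    refine ⟨c, hc, ?_⟩
    simp only
    rw [h1 a ha b hb, hcc]
  · rintro ⟨b, hb, rfl⟩
    obtain ⟨c, hc, hcc⟩ := hperm a ha b hb
    refine ⟨δ (coroot c) • coroot c, ⟨c, hc, rfl⟩, ?_⟩
    simp only
    rw [h1 a ha c hc]
    rw [← hcc, hδinv a ha, hinvo, hδinv a ha]
end

section
/- Let R be a finite irreducible root system spanning a finite-dimensional ℚ-vector space V, with Weyl group W. If B₁ and B₂ are two W-invariant symmetric bilinear forms on V and B₁ is nonzero, then there exists c ∈ ℚ with B₂ = c·B₁. In particular, every W-invariant symmetric bilinear form on V is a rational multiple of the Killing-type form κ(x, y) = Σ_{α̌ ∈ Ř} α̌(x)·α̌(y), the sum over all roots α̌ of the dual root system. -/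
private lemma bilin_eq_zero {V : Type*} [AddCommGroup V] [Module ℚ V]
    {R : Finset V} (hspan : Submodule.span ℚ (R : Set V) = ⊤)
    {B : V →ₗ[ℚ] V →ₗ[ℚ] ℚ} (h : ∀ α ∈ R, ∀ β ∈ R, B α β = 0) : B = 0 := by
  have h1 : ∀ α ∈ R, B α = 0 := by
    intro α hα
    have hk : Submodule.span ℚ (R : Set V) ≤ LinearMap.ker (B α) :=
      Submodule.span_le.mpr fun β hβ => LinearMap.mem_ker.mpr (h α hα β hβ)
    rw [hspan, top_le_iff] at hk
    exact LinearMap.ker_eq_top.mp hk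
  have hk : Submodule.span ℚ (R : Set V) ≤ LinearMap.ker B :=
    Submodule.span_le.mpr fun α hα => LinearMap.mem_ker.mpr (h1 α hα)
  rw [hspan, top_le_iff] at hk
  exact LinearMap.ker_eq_top.mp hk

private lemma key_rel {V : Type*} [AddCommGroup V] [Module ℚ V]
    {R : Finset V} {coroot : V → Module.Dual ℚ V}
    (hpair : ∀ α ∈ R, coroot α α = 2)
    {B : V →ₗ[ℚ] V →ₗ[ℚ] ℚ}
    (hinv : ∀ α ∈ R, ∀ x y : V,
      B (x - coroot α x • α) (y - coroot α y • α) = B x y) :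
    ∀ α ∈ R, ∀ y : V, 2 * B α y = B α α * coroot α y := by
  intro α hα y
  have h := hinv α hα α y
  rw [hpair α hα] at h
  have e : α - (2 : ℚ) • α = -α := by module
  rw [e] at h
  simp only [map_neg, map_sub, map_smul, LinearMap.neg_apply, LinearMap.sub_apply,
    LinearMap.smul_apply, smul_eq_mul] at h
  linarith

private lemma aux_unique {V : Type*} [AddCommGroup V] [Module ℚ V]
    {R : Finset V} (hspan : Submodule.span ℚ (R : Set V) = ⊤)
    {coroot : V → Module.Dual ℚ V}
    (hpair : ∀ α ∈ R, coroot α α = 2)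
    (hirr : ¬ ∃ R₁ R₂ : Finset V, R₁.Nonempty ∧ R₂.Nonempty ∧
      (R₁ : Set V) ∪ (R₂ : Set V) = (R : Set V) ∧ Disjoint R₁ R₂ ∧
      ∀ α ∈ R₁, ∀ β ∈ R₂, coroot α β = 0)
    {B₁ B₂ : V →ₗ[ℚ] V →ₗ[ℚ] ℚ}
    (h₁symm : ∀ x y : V, B₁ x y = B₁ y x) (h₂symm : ∀ x y : V, B₂ x y = B₂ y x)
    (h₁inv : ∀ α ∈ R, ∀ x y : V,
      B₁ (x - coroot α x • α) (y - coroot α y • α) = B₁ x y)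
    (h₂inv : ∀ α ∈ R, ∀ x y : V,
      B₂ (x - coroot α x • α) (y - coroot α y • α) = B₂ x y)
    (h₁ne : B₁ ≠ 0) :
    ∃ c : ℚ, ∀ x y : V, B₂ x y = c * B₁ x y := by
  classical
  have k₁ := key_rel hpair h₁inv
  have k₂ := key_rel hpair h₂inv
  obtain ⟨α, hα, β, hβ, hab⟩ : ∃ α ∈ R, ∃ β ∈ R, B₁ α β ≠ 0 := by
    by_contra hc
    push_neg at hc
    exact h₁ne (bilin_eq_zero hspan hc)
  have hαα : B₁ α α ≠ 0 := by
    intro h0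
    have h := k₁ α hα β
    rw [h0, zero_mul] at h
    exact hab (by linarith)
  -- every root γ has B₁ γ γ ≠ 0
  have hall : ∀ γ ∈ R, B₁ γ γ ≠ 0 := by
    by_contra hc
    push_neg at hc
    obtain ⟨δ₀, hδ₀, hδ₀0⟩ := hc
    refine hirr ⟨R.filter (fun γ => B₁ γ γ ≠ 0), R.filter (fun γ => ¬ B₁ γ γ ≠ 0),
      ⟨α, Finset.mem_filter.mpr ⟨hα, hαα⟩⟩,
      ⟨δ₀, Finset.mem_filter.mpr ⟨hδ₀, not_not.mpr hδ₀0⟩⟩, ?_,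
      Finset.disjoint_filter_filter_not _ _ _, ?_⟩
    · rw [← Finset.coe_union, Finset.filter_union_filter_not_eq]
    · intro γ hγ δ hδ
      rw [Finset.mem_filter] at hγ hδ
      have hδδ : B₁ δ δ = 0 := not_not.mp hδ.2
      have h1 := k₁ γ hγ.1 δ
      have h2 := k₁ δ hδ.1 γ
      rw [hδδ, zero_mul] at h2
      have hbd : B₁ γ δ = 0 := by rw [h₁symm γ δ]; linarith
      rw [hbd, mul_zero] at h1
      rcases mul_eq_zero.mp h1.symm with h | h
      · exact absurd h hγ.2
      · exact h
  -- the diagonal ratio is constant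
  have hconst : ∀ γ ∈ R, B₂ γ γ * B₁ α α = B₂ α α * B₁ γ γ := by
    by_contra hc
    push_neg at hc
    obtain ⟨δ₀, hδ₀, hδ₀ne⟩ := hc
    refine hirr ⟨R.filter (fun γ => B₂ γ γ * B₁ α α = B₂ α α * B₁ γ γ),
      R.filter (fun γ => ¬ B₂ γ γ * B₁ α α = B₂ α α * B₁ γ γ),
      ⟨α, Finset.mem_filter.mpr ⟨hα, rfl⟩⟩,
      ⟨δ₀, Finset.mem_filter.mpr ⟨hδ₀, hδ₀ne⟩⟩, ?_,
      Finset.disjoint_filter_filter_not _ _ _, ?_⟩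
    · rw [← Finset.coe_union, Finset.filter_union_filter_not_eq]
    · intro γ hγ δ hδ
      rw [Finset.mem_filter] at hγ hδ
      by_contra hne0
      have h1 := k₁ γ hγ.1 δ
      have h1' := k₁ δ hδ.1 γ
      have h2 := k₂ γ hγ.1 δ
      have h2' := k₂ δ hδ.1 γ
      have e1 : B₁ γ γ * coroot γ δ = B₁ δ δ * coroot δ γ := by
        rw [← h1, ← h1', h₁symm]
      have e2 : B₂ γ γ * coroot γ δ = B₂ δ δ * coroot δ γ := by
        rw [← h2, ← h2', h₂symm]
      have hcδγ : coroot δ γ ≠ 0 := by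
        intro h0
        rw [h0, mul_zero] at e1
        exact (mul_ne_zero (hall γ hγ.1) hne0) e1
      refine hδ.2 (mul_right_cancel₀ hcδγ ?_)
      linear_combination (coroot γ δ) * hγ.2 + (B₂ α α) * e1 - (B₁ α α) * e2
  refine ⟨B₂ α α / B₁ α α, ?_⟩
  have hroot : ∀ γ ∈ R, ∀ y : V, B₂ γ y = (B₂ α α / B₁ α α) * B₁ γ y := by
    intro γ hγ y
    rw [div_mul_eq_mul_div, eq_div_iff hαα]
    linear_combination (B₁ α α * (k₂ γ hγ y) + coroot γ y * (hconst γ hγ)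
      - B₂ α α * (k₁ γ hγ y)) / 2
  have hL : B₂ - (B₂ α α / B₁ α α) • B₁ = 0 := by
    apply bilin_eq_zero hspan
    intro γ hγ δ _
    simp only [LinearMap.sub_apply, LinearMap.smul_apply, smul_eq_mul]
    rw [hroot γ hγ δ]
    ring
  intro x y
  have h := LinearMap.congr_fun (LinearMap.congr_fun hL x) y
  simp only [LinearMap.sub_apply, LinearMap.smul_apply, smul_eq_mul,
    LinearMap.zero_apply] at h
  linarith

private lemma coroot_funct {V : Type*} [AddCommGroup V] [Module ℚ V]
    {R : Finset V} (hspan : Submodule.span ℚ (R : Set V) = ⊤)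
    (hne : ∀ α ∈ R, α ≠ 0)
    {coroot : V → Module.Dual ℚ V}
    (hpair : ∀ α ∈ R, coroot α α = 2)
    (hstab : ∀ α ∈ R, ∀ β ∈ R, β - coroot α β • α ∈ R) :
    ∀ α ∈ R, ∀ β ∈ R, ∀ x : V,
      coroot (β - coroot α β • α) x = coroot β (x - coroot α x • α) := by
  intro α hα β hβ x
  set sα := Module.preReflection α (coroot α) with hsαdef
  have hsα_apply : ∀ y : V, sα y = y - coroot α y • α := fun y =>
    Module.preReflection_apply α (coroot α) y
  have hinvol : Function.Involutive sα :=
    Module.involutive_preReflection (hpair α hα)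
  have hmapsto : Set.MapsTo sα (R : Set V) (R : Set V) := by
    intro γ hγ
    rw [hsα_apply]
    exact_mod_cast hstab α hα γ hγ
  have hβ'R : β - coroot α β • α ∈ R := hstab α hα β hβ
  have hβ'eq : β - coroot α β • α = sα β := (hsα_apply β).symm
  have key : coroot (β - coroot α β • α) = (coroot β).comp (sα : V →ₗ[ℚ] V) := by
    refine Module.Dual.eq_of_preReflection_mapsTo R.finite_toSet hspan
      (hpair _ hβ'R) ?_ ?_ ?_
    · intro γ hγ
      rw [Module.preReflection_apply]
      exact_mod_cast hstab _ hβ'R γ hγ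
    · show coroot β (sα (β - coroot α β • α)) = 2
      rw [hβ'eq, hinvol β]
      exact hpair β hβ
    · intro γ hγ
      have h1 : sα γ ∈ R := by simpa using hmapsto hγ
      have h2 : sα γ - coroot β (sα γ) • β ∈ R := hstab β hβ _ h1
      have h3 : sα (sα γ - coroot β (sα γ) • β) ∈ (R : Set V) :=
        hmapsto (by simpa using h2)
      have e : sα (sα γ - coroot β (sα γ) • β) = γ - coroot β (sα γ) • (β - coroot α β • α) := by
        rw [map_sub, map_smul, hinvol γ, hβ'eq]
      rw [e] at h3
      show (Module.preReflection (β - coroot α β • α) ((coroot β).comp (sα : V →ₗ[ℚ] V))) γ ∈ (R : Set V)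
      rw [Module.preReflection_apply]
      simpa using h3
  rw [key]
  simp [hsα_apply]

/-- Let `R` be a finite irreducible root system spanning a finite-dimensional
`ℚ`-vector space `V`, with coroots `coroot α` in the dual space (`⟨α, α̌⟩ = 2`,
reflections preserve `R`, integrality holds), irreducible in the sense that `R`
admits no partition into two nonempty mutually orthogonal subsets.  If `B₁, B₂` are
symmetric bilinear forms invariant under the Weyl group (equivalently, under every
reflection `s_α`) and `B₁ ≠ 0`, then `B₂ = c·B₁` for some `c ∈ ℚ`.  In particular
every invariant symmetric bilinear form is a rational multiple of the Killing-type
form `κ(x,y) = ∑_{α ∈ R} α̌(x)·α̌(y)`. -/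
theorem stmt_16 (V : Type*) [AddCommGroup V] [Module ℚ V] [FiniteDimensional ℚ V]
    (R : Finset V) (hspan : Submodule.span ℚ (R : Set V) = ⊤)
    (hne : ∀ α ∈ R, α ≠ 0)
    (coroot : V → Module.Dual ℚ V)
    (hpair : ∀ α ∈ R, coroot α α = 2)
    (hstab : ∀ α ∈ R, ∀ β ∈ R, β - coroot α β • α ∈ R)
    (hint : ∀ α ∈ R, ∀ β ∈ R, ∃ n : ℤ, coroot α β = (n : ℚ))
    (hirr : ¬ ∃ R₁ R₂ : Finset V, R₁.Nonempty ∧ R₂.Nonempty ∧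
      (R₁ : Set V) ∪ (R₂ : Set V) = (R : Set V) ∧ Disjoint R₁ R₂ ∧ ∀ α ∈ R₁, ∀ β ∈ R₂, coroot α β = 0)
    (B₁ B₂ : V →ₗ[ℚ] V →ₗ[ℚ] ℚ)
    (h₁symm : ∀ x y : V, B₁ x y = B₁ y x) (h₂symm : ∀ x y : V, B₂ x y = B₂ y x)
    (h₁inv : ∀ α ∈ R, ∀ x y : V,
      B₁ (x - coroot α x • α) (y - coroot α y • α) = B₁ x y)
    (h₂inv : ∀ α ∈ R, ∀ x y : V,
      B₂ (x - coroot α x • α) (y - coroot α y • α) = B₂ x y)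
    (h₁ne : B₁ ≠ 0) :
    (∃ c : ℚ, ∀ x y : V, B₂ x y = c * B₁ x y) ∧
    (∃ c : ℚ, ∀ x y : V, B₂ x y = c * ∑ α ∈ R, coroot α x * coroot α y) := by
  classical
  obtain ⟨c₁, hc₁⟩ := aux_unique hspan hpair hirr h₁symm h₂symm h₁inv h₂inv h₁ne
  have hRne : R.Nonempty := by
    rcases R.eq_empty_or_nonempty with h | h
    · exfalso
      apply h₁ne
      have hz : ∀ x : V, x = 0 := by
        intro x
        have hx : x ∈ Submodule.span ℚ ((R : Set V)) := hspan ▸ Submodule.mem_top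
        rw [h] at hx
        simpa using hx
      ext x y
      rw [hz x]
      simp
    · exact h
  obtain ⟨α₀, hα₀⟩ := hRne
  set K : V →ₗ[ℚ] V →ₗ[ℚ] ℚ :=
    LinearMap.mk₂ ℚ (fun x y => ∑ γ ∈ R, coroot γ x * coroot γ y)
      (by intro x x' y; simp [map_add, add_mul, Finset.sum_add_distrib])
      (by intro c x y; simp [Finset.mul_sum, map_smul, smul_eq_mul, mul_assoc])
      (by intro x y y'; simp [map_add, mul_add, Finset.sum_add_distrib])
      (by
        intro c x y
        simp only [map_smul, smul_eq_mul, Finset.mul_sum]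
        exact Finset.sum_congr rfl fun γ _ => by ring) with hKdef
  have hKapp : ∀ x y : V, K x y = ∑ γ ∈ R, coroot γ x * coroot γ y := fun x y => rfl
  have hKsymm : ∀ x y : V, K x y = K y x := by
    intro x y
    rw [hKapp, hKapp]
    exact Finset.sum_congr rfl fun γ _ => mul_comm _ _
  have hfun := coroot_funct hspan hne hpair hstab
  have hKinv : ∀ β ∈ R, ∀ x y : V,
      K (x - coroot β x • β) (y - coroot β y • β) = K x y := by
    intro β hβ x y
    rw [hKapp, hKapp]
    refine Finset.sum_nbij' (i := fun γ => γ - coroot β γ • β)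
      (j := fun γ => γ - coroot β γ • β) ?_ ?_ ?_ ?_ ?_
    · intro γ hγ; exact hstab β hβ γ hγ
    · intro γ hγ; exact hstab β hβ γ hγ
    · intro γ hγ
      simp only [map_sub, map_smul, hpair β hβ, smul_eq_mul]
      module
    · intro γ hγ
      simp only [map_sub, map_smul, hpair β hβ, smul_eq_mul]
      module
    · intro γ hγ
      rw [hfun β hβ γ hγ x, hfun β hβ γ hγ y]
  obtain ⟨c₀, hc₀⟩ := aux_unique hspan hpair hirr h₁symm hKsymm h₁inv hKinv h₁ne
  have hKαα : (4 : ℚ) ≤ K α₀ α₀ := by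
    rw [hKapp]
    have h4 : coroot α₀ α₀ * coroot α₀ α₀ = 4 := by rw [hpair α₀ hα₀]; norm_num
    calc (4 : ℚ) = coroot α₀ α₀ * coroot α₀ α₀ := h4.symm
    _ ≤ ∑ γ ∈ R, coroot γ α₀ * coroot γ α₀ :=
        Finset.single_le_sum (f := fun γ => coroot γ α₀ * coroot γ α₀)
          (fun γ _ => mul_self_nonneg _) hα₀
  have hc₀ne : c₀ ≠ 0 := by
    intro h0
    have h := hc₀ α₀ α₀
    rw [h0, zero_mul] at h
    linarith
  refine ⟨⟨c₁, hc₁⟩, ⟨c₁ / c₀, ?_⟩⟩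
  intro x y
  rw [← hKapp, hc₁ x y, hc₀ x y]
  field_simp
end
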